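/- Let μ be the measure on ℝ² with density (e^{-x}/(2λ)) φ(λ + (y-x)/(2λ)) dx dy, λ > 0. Then μ({(x,y) : x > 0, y - x ≤ t}) = Φ(λ + t/(2λ)) for all t ∈ ℝ, so that conditional on x > 0 the increment y - x follows a normal distribution with mean -2λ² and variance 4λ². -/

import Mathlib

open Real MeasureTheory

noncomputable def stdPhi (t : ℝ) : ℝ := (Real.sqrt (2 * Real.pi))⁻¹ * Real.exp (-t ^ 2 / 2)

noncomputable def stdPhiCDF (x : ℝ) : ℝ := ∫ t in Set.Iic x, stdPhi t

lemma stdPhi_eq : stdPhi = ProbabilityTheory.gaussianPDFReal 0 1 := by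
  ext t
  simp [stdPhi, ProbabilityTheory.gaussianPDFReal, neg_div]

lemma measurable_stdPhi : Measurable stdPhi := by
  rw [stdPhi_eq]; exact ProbabilityTheory.measurable_gaussianPDFReal 0 1

lemma integrable_stdPhi : Integrable stdPhi := by
  rw [stdPhi_eq]; exact ProbabilityTheory.integrable_gaussianPDFReal 0 1

lemma stdPhi_nonneg (t : ℝ) : 0 ≤ stdPhi t := by
  rw [stdPhi_eq]; exact ProbabilityTheory.gaussianPDFReal_nonneg 0 1 t

lemma lintegral_stdPhi_Iic (s : ℝ) :
    ∫⁻ u in Set.Iic s, ENNReal.ofReal (stdPhi u) = ENNReal.ofReal (stdPhiCDF s) := by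
  rw [stdPhiCDF, ← ofReal_integral_eq_lintegral_ofReal
    (integrable_stdPhi.integrableOn) (ae_of_all _ fun u => stdPhi_nonneg u)]

lemma subst_lemma (l x t : ℝ) (hl : 0 < l) :
    ∫⁻ y in Set.Iic (x + t), ENNReal.ofReal (stdPhi (l + (y - x) / (2 * l))) =
      ENNReal.ofReal (2 * l) * ENNReal.ofReal (stdPhiCDF (l + t / (2 * l))) := by
  set T : ℝ → ℝ := fun u => 2 * l * u + (x - 2 * l ^ 2) with hT
  have hTmeas : Measurable T := by fun_prop
  have h2l : (2 : ℝ) * l ≠ 0 := by positivity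
  have hmap : Measure.map T volume = ENNReal.ofReal ((2 * l)⁻¹) • (volume : Measure ℝ) := by
    have : T = (fun u => u + (x - 2 * l ^ 2)) ∘ (fun u => 2 * l * u) := rfl
    rw [this, ← Measure.map_map (by fun_prop) (by fun_prop),
      Real.map_volume_mul_left h2l, Measure.map_smul,
      map_add_right_eq_self volume _]
    congr 1
    rw [abs_of_pos (by positivity)]
  have hvol : (volume : Measure ℝ) = ENNReal.ofReal (2 * l) • Measure.map T volume := by
    rw [hmap, smul_smul, ← ENNReal.ofReal_mul (by positivity), mul_inv_cancel₀ h2l,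
      ENNReal.ofReal_one, one_smul]
  have hpre : T ⁻¹' (Set.Iic (x + t)) = Set.Iic (l + t / (2 * l)) := by
    ext u
    simp only [Set.mem_preimage, Set.mem_Iic, hT]
    rw [show l + t / (2 * l) = (2 * l * l + t) / (2 * l) by field_simp,
      le_div_iff₀ (by positivity)]
    constructor <;> intro h <;> nlinarith
  calc ∫⁻ y in Set.Iic (x + t), ENNReal.ofReal (stdPhi (l + (y - x) / (2 * l)))
      = ∫⁻ y in Set.Iic (x + t), ENNReal.ofReal (stdPhi (l + (y - x) / (2 * l)))
          ∂(ENNReal.ofReal (2 * l) • Measure.map T volume) := by rw [← hvol]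
    _ = ENNReal.ofReal (2 * l) * ∫⁻ y in Set.Iic (x + t),
          ENNReal.ofReal (stdPhi (l + (y - x) / (2 * l))) ∂(Measure.map T volume) := by
        rw [Measure.restrict_smul, lintegral_smul_measure, smul_eq_mul]
    _ = ENNReal.ofReal (2 * l) * ∫⁻ u in T ⁻¹' (Set.Iic (x + t)),
          ENNReal.ofReal (stdPhi (l + (T u - x) / (2 * l))) ∂volume := by
        rw [setLIntegral_map (f := fun y => ENNReal.ofReal (stdPhi (l + (y - x) / (2 * l)))) measurableSet_Iic (ENNReal.measurable_ofReal.comp (measurable_stdPhi.comp (by fun_prop))) hTmeas]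
    _ = ENNReal.ofReal (2 * l) * ∫⁻ u in Set.Iic (l + t / (2 * l)),
          ENNReal.ofReal (stdPhi u) ∂volume := by
        rw [hpre]
        congr 1
        refine lintegral_congr fun u => ?_
        congr 2
        field_simp [hT]
        ring
    _ = ENNReal.ofReal (2 * l) * ENNReal.ofReal (stdPhiCDF (l + t / (2 * l))) := by
        rw [lintegral_stdPhi_Iic]

/-- Exponent measure of the bivariate Hüsler-Reiss distribution, with density
`e^{-x}/(2λ) φ(λ + (y-x)/(2λ))` with respect to Lebesgue measure on ℝ². -/
noncomputable def HRexpMeasure (l : ℝ) : Measure (ℝ × ℝ) :=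
  (volume : Measure (ℝ × ℝ)).withDensity
    (fun p => ENNReal.ofReal (Real.exp (-p.1) / (2 * l) * stdPhi (l + (p.2 - p.1) / (2 * l))))

lemma stdPhiCDF_nonneg (s : ℝ) : 0 ≤ stdPhiCDF s :=
  integral_nonneg fun u => stdPhi_nonneg u

/-- Conditional on the first coordinate being positive, the increment is Gaussian with
mean `-2λ²` and variance `4λ²`: its CDF is `t ↦ Φ(λ + t/(2λ)) = Φ((t-(-2λ²))/√(4λ²))`. -/
theorem HRexpMeasure_increment_gaussian (l : ℝ) (hl : 0 < l) :
    (∀ t : ℝ, HRexpMeasure l {p : ℝ × ℝ | 0 < p.1 ∧ p.2 - p.1 ≤ t} =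
      ENNReal.ofReal (stdPhiCDF (l + t / (2 * l)))) ∧
    (∀ t : ℝ, stdPhiCDF (l + t / (2 * l)) =
      stdPhiCDF ((t - (-(2 * l ^ 2))) / Real.sqrt (4 * l ^ 2))) := by
  have h2l : (0:ℝ) < 2 * l := by positivity
  constructor
  · intro t
    set C : ℝ := stdPhiCDF (l + t / (2 * l)) with hC
    set F : ℝ × ℝ → ENNReal :=
      fun p => ENNReal.ofReal (Real.exp (-p.1) / (2 * l) * stdPhi (l + (p.2 - p.1) / (2 * l)))
      with hF
    have hFmeas : Measurable F := by
      apply ENNReal.measurable_ofReal.comp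
      exact ((Real.measurable_exp.comp measurable_fst.neg).div_const _).mul
        (measurable_stdPhi.comp (by fun_prop))
    have hS : MeasurableSet {p : ℝ × ℝ | 0 < p.1 ∧ p.2 - p.1 ≤ t} :=
      (measurableSet_lt measurable_const measurable_fst).inter
        (measurableSet_le (measurable_snd.sub measurable_fst) measurable_const)
    rw [HRexpMeasure, withDensity_apply _ hS]
    calc ∫⁻ p in {p : ℝ × ℝ | 0 < p.1 ∧ p.2 - p.1 ≤ t}, F p
        = ∫⁻ p, Set.indicator {p : ℝ × ℝ | 0 < p.1 ∧ p.2 - p.1 ≤ t} F p := by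
          rw [lintegral_indicator hS]
      _ = ∫⁻ x, ∫⁻ y, Set.indicator {p : ℝ × ℝ | 0 < p.1 ∧ p.2 - p.1 ≤ t} F (x, y) := by
          rw [MeasureTheory.Measure.volume_eq_prod, lintegral_prod]
          exact (hFmeas.indicator hS).aemeasurable
      _ = ∫⁻ x, Set.indicator (Set.Ioi 0)
            (fun x => ∫⁻ y in Set.Iic (x + t), F (x, y)) x := by
          refine lintegral_congr fun x => ?_
          by_cases hx : 0 < x
          · rw [Set.indicator_of_mem (show x ∈ Set.Ioi 0 from hx)]
            rw [← lintegral_indicator measurableSet_Iic]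
            refine lintegral_congr fun y => ?_
            simp only [Set.indicator_apply, Set.mem_setOf_eq, Set.mem_Iic, hx, true_and,
              sub_le_iff_le_add, add_comm t x]
          · rw [Set.indicator_of_notMem (show x ∉ Set.Ioi 0 from hx)]
            simp only [Set.indicator_apply, Set.mem_setOf_eq, hx, false_and, if_false]
            simp
      _ = ∫⁻ x in Set.Ioi 0, ∫⁻ y in Set.Iic (x + t), F (x, y) := by
          rw [lintegral_indicator measurableSet_Ioi]
      _ = ∫⁻ x in Set.Ioi 0, ENNReal.ofReal (Real.exp (-x)) * ENNReal.ofReal C := by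
          refine setLIntegral_congr_fun measurableSet_Ioi (fun x hx => ?_)
          calc ∫⁻ y in Set.Iic (x + t), F (x, y)
              = ∫⁻ y in Set.Iic (x + t), ENNReal.ofReal (Real.exp (-x) / (2 * l)) *
                  ENNReal.ofReal (stdPhi (l + (y - x) / (2 * l))) := by
                refine lintegral_congr fun y => ?_
                rw [hF, ← ENNReal.ofReal_mul (by positivity)]
            _ = ENNReal.ofReal (Real.exp (-x) / (2 * l)) *
                  ∫⁻ y in Set.Iic (x + t), ENNReal.ofReal (stdPhi (l + (y - x) / (2 * l))) := by
                rw [lintegral_const_mul _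
                  ((show Measurable fun y : ℝ => stdPhi (l + (y - x) / (2 * l)) from
                    measurable_stdPhi.comp (by fun_prop)).ennreal_ofReal)]
            _ = ENNReal.ofReal (Real.exp (-x) / (2 * l)) *
                  (ENNReal.ofReal (2 * l) * ENNReal.ofReal C) := by
                rw [subst_lemma l x t hl, hC]
            _ = ENNReal.ofReal (Real.exp (-x)) * ENNReal.ofReal C := by
                rw [← mul_assoc, ← ENNReal.ofReal_mul (by positivity)]
                congr 2
                field_simp
      _ = (∫⁻ x in Set.Ioi 0, ENNReal.ofReal (Real.exp (-x))) * ENNReal.ofReal C := by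
          rw [lintegral_mul_const _ ((by fun_prop : Measurable fun x : ℝ => Real.exp (-x)).ennreal_ofReal)]
      _ = ENNReal.ofReal C := by
          have hInt : IntegrableOn (fun x => Real.exp (-x)) (Set.Ioi (0:ℝ)) := by
            simpa using exp_neg_integrableOn_Ioi 0 (zero_lt_one)
          rw [← ofReal_integral_eq_lintegral_ofReal hInt
            (ae_of_all _ fun x => (Real.exp_pos _).le), integral_exp_neg_Ioi_zero,
            ENNReal.ofReal_one, one_mul]
  · intro t
    have h4 : Real.sqrt (4 * l ^ 2) = 2 * l := by
      rw [show (4:ℝ) * l ^ 2 = (2 * l) ^ 2 by ring, Real.sqrt_sq (by positivity)]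
    rw [h4]
    congr 1
    field_simp
    ring
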